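/- Let D be a k-linear triangulated category of finite type with a Serre functor S, equipped with a t-structure (D≤0, D≥0). An object X is Ext-projective in D≤0 (i.e., X ∈ D≤0 and Hom(X, Y[1]) = 0 for all Y ∈ D≤0) if and only if X ∈ D≤0 and S X ∈ D≥0, if and only if S X is Ext-injective in D≥0 (i.e., S X ∈ D≥0 and Hom(Y, S X[1]) = 0 for all Y ∈ D≥0). -/

import Mathlib

open CategoryTheory CategoryTheory.Limits CategoryTheory.Pretriangulated
open CategoryTheory.Triangulated

universe v u

variable (k : Type*) [Field k]

/-- A Serre functor on a Hom-finite `k`-linear category: an autoequivalence `E`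
together with functorial isomorphisms `Hom(X, Y) ≅ (Hom(Y, E X))ᵛ`. -/
structure SerreFunctorData (C : Type u) [Category.{v} C] [Preadditive C] [Linear k C] where
  E : C ≌ C
  pairing : ∀ X Y : C, (X ⟶ Y) ≃ₗ[k] Module.Dual k (Y ⟶ E.functor.obj X)
  naturality_right : ∀ {X Y Y' : C} (g : X ⟶ Y) (u : Y ⟶ Y') (h : Y' ⟶ E.functor.obj X),
    pairing X Y' (g ≫ u) h = pairing X Y g (u ≫ h)
  naturality_left : ∀ {X X' Y : C} (v : X' ⟶ X) (g : X ⟶ Y) (h : Y ⟶ E.functor.obj X'),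
    pairing X' Y (v ≫ g) h = pairing X Y g (h ≫ E.functor.map v)

variable {C : Type u} [Category.{v} C] [Preadditive C] [Linear k C]
  [HasZeroObject C] [HasShift C ℤ] [∀ n : ℤ, (shiftFunctor C n).Additive] [Pretriangulated C]
  [∀ X Y : C, FiniteDimensional k (X ⟶ Y)]

/-- `X` is Ext-projective in `D^{≤0}`: `X ∈ D^{≤0}` and `Hom(X, Y[1]) = 0` for `Y ∈ D^{≤0}`. -/
def ExtProjective (t : TStructure C) (X : C) : Prop :=
  t.le 0 X ∧ ∀ Y : C, t.le 0 Y → ∀ f : X ⟶ Y⟦(1 : ℤ)⟧, f = 0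

/-- `X` is Ext-injective in `D^{≥0}`: `X ∈ D^{≥0}` and `Hom(Y, X[1]) = 0` for `Y ∈ D^{≥0}`. -/
def ExtInjective (t : TStructure C) (X : C) : Prop :=
  t.ge 0 X ∧ ∀ Y : C, t.ge 0 Y → ∀ f : Y ⟶ X⟦(1 : ℤ)⟧, f = 0

section Aux

variable (t : TStructure C)

/-- Orthogonality: any map from an object of `D^{≤ a}` to an object of `D^{≥ b}` with `a < b`
vanishes. -/
lemma aux_zero_of {a b : ℤ} (hab : a < b) {X Y : C} (hX : t.le a X) (hY : t.ge b Y)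
    (f : X ⟶ Y) : f = 0 := by
  have hX' : t.le 0 (X⟦a⟧) := t.le_shift a a 0 (by omega) X hX
  have hY' : t.ge (b - a) (Y⟦a⟧) := t.ge_shift b a (b - a) (by omega) Y hY
  have hY'' : t.ge 1 (Y⟦a⟧) := t.ge_antitone (by omega : (1:ℤ) ≤ b - a) _ hY'
  have h : (shiftFunctor C a).map f = 0 := t.zero' _ hX' hY''
  exact (shiftFunctor C a).map_injective (by rw [h, Functor.map_zero])

/-- If every map from an object of `D^{≤ -1}` to `A` vanishes, then `A ∈ D^{≥ 0}`. -/
lemma aux_ge_of_orth {A : C} (h : ∀ Z : C, t.le (-1) Z → ∀ g : Z ⟶ A, g = 0) :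
    t.ge 0 A := by
  obtain ⟨Z, Y, hZ, hY, f, g, w, mem⟩ := t.exists_triangle A (-1) 0 (by omega)
  have hf : f = 0 := h Z hZ f
  -- show `Z` is a zero object
  have hZzero : IsZero Z := by
    rw [IsZero.iff_id_eq_zero]
    obtain ⟨v, hv⟩ := Triangle.coyoneda_exact₂ _ (inv_rot_of_distTriang _ mem) (𝟙 Z)
      (by exact (Category.id_comp f).trans hf)
    have hv0 : v = 0 := aux_zero_of t (by omega : (-1:ℤ) < 1) hZ
      (t.ge_shift 0 (-1) 1 (by omega) Y hY) v
    rw [hv, hv0, zero_comp]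
    rfl
  have : IsIso ((Triangle.mk f g w).mor₂) :=
    ((Triangle.mk f g w).isZero₁_iff_isIso₂ mem).1 hZzero
  exact (t.ge 0).prop_of_iso (asIso ((Triangle.mk f g w).mor₂)).symm hY

/-- If every map from `X` to an object of `D^{≥ 1}` vanishes, then `X ∈ D^{≤ 0}`. -/
lemma aux_le_of_orth {X : C} (h : ∀ Z : C, t.ge 1 Z → ∀ g : X ⟶ Z, g = 0) :
    t.le 0 X := by
  obtain ⟨A, B, hA, hB, f, g, w, mem⟩ := t.exists_triangle X 0 1 (by omega)
  have hg : g = 0 := h B hB g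
  have hBzero : IsZero B := by
    rw [IsZero.iff_id_eq_zero]
    obtain ⟨s, hs⟩ := Triangle.yoneda_exact₃ _ mem (𝟙 B) (by exact (Category.comp_id g).trans hg)
    have hs0 : s = 0 := aux_zero_of t (by omega : (-1:ℤ) < 1)
      (t.le_shift 0 1 (-1) (by omega) A hA) hB s
    rw [hs, hs0, comp_zero]
    rfl
  have : IsIso ((Triangle.mk f g w).mor₁) :=
    ((Triangle.mk f g w).isZero₃_iff_isIso₁ mem).1 hBzero
  exact (t.le 0).prop_of_iso (@asIso _ _ _ _ ((Triangle.mk f g w).mor₁) this) hA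

end Aux

section Serre

variable {k}

/-- Serre duality: if `Hom(X, Z) = 0` then `Hom(Z, S X) = 0`. -/
lemma aux_serre_forward (σ : SerreFunctorData k C) {X Z : C}
    (h : ∀ f : X ⟶ Z, f = 0) (g : Z ⟶ σ.E.functor.obj X) : g = 0 := by
  rw [← Module.forall_dual_apply_eq_zero_iff k g]
  intro φ
  obtain ⟨f, rfl⟩ := (σ.pairing X Z).surjective φ
  rw [h f, map_zero]
  rfl

/-- Serre duality: if `Hom(Z, S X) = 0` then `Hom(X, Z) = 0`. -/
lemma aux_serre_backward (σ : SerreFunctorData k C) {X Z : C}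
    (h : ∀ g : Z ⟶ σ.E.functor.obj X, g = 0) (f : X ⟶ Z) : f = 0 := by
  have hp : σ.pairing X Z f = 0 := by
    apply LinearMap.ext
    intro g
    rw [h g, map_zero]
    rfl
  exact (LinearEquiv.map_eq_zero_iff _).1 hp

end Serre

/-- Let `D` be a `k`-linear triangulated category of finite type with Serre functor `S` and a
t-structure `(D^{≤0}, D^{≥0})`.  Then `X` is Ext-projective in `D^{≤0}` iff `X ∈ D^{≤0}` and
`S X ∈ D^{≥0}`, iff `S X` is Ext-injective in `D^{≥0}`. -/
theorem extProjective_iff_serre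
    (hfin : ∀ X Y : C, {n : ℤ | ∃ f : X ⟶ Y⟦n⟧, f ≠ 0}.Finite)
    (σ : SerreFunctorData k C) (t : TStructure C) (X : C) :
    (ExtProjective t X ↔ (t.le 0 X ∧ t.ge 0 (σ.E.functor.obj X))) ∧
    (ExtProjective t X ↔ ExtInjective t (σ.E.functor.obj X)) := by
  have hPB : ExtProjective t X ↔ (t.le 0 X ∧ t.ge 0 (σ.E.functor.obj X)) := by
    constructor
    · rintro ⟨hXle, hP⟩
      refine ⟨hXle, aux_ge_of_orth t ?_⟩
      intro Z hZ g
      have hY : t.le 0 (Z⟦(-1:ℤ)⟧) := t.le_shift (-1) (-1) 0 (by omega) Z hZ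
      have h0 : ∀ g' : (Z⟦(-1:ℤ)⟧)⟦(1:ℤ)⟧ ⟶ σ.E.functor.obj X, g' = 0 :=
        aux_serre_forward σ (hP _ hY)
      have e : (Z⟦(-1:ℤ)⟧)⟦(1:ℤ)⟧ ≅ Z := shiftNegShift Z (1 : ℤ)
      have : g = e.inv ≫ (e.hom ≫ g) := by rw [← Category.assoc, e.inv_hom_id, Category.id_comp]
      rw [this, h0 (e.hom ≫ g), comp_zero]
    · rintro ⟨hXle, hSge⟩
      refine ⟨hXle, ?_⟩
      intro Y hY f
      refine aux_serre_backward σ ?_ f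
      intro g
      exact aux_zero_of t (by omega : (-1:ℤ) < 0)
        (t.le_shift 0 1 (-1) (by omega) Y hY) hSge g
  have hBI : (t.le 0 X ∧ t.ge 0 (σ.E.functor.obj X)) ↔
      ExtInjective t (σ.E.functor.obj X) := by
    constructor
    · rintro ⟨hXle, hSge⟩
      refine ⟨hSge, ?_⟩
      intro Y hY f
      -- show `f⟦-1⟧ = 0`
      have hYm : t.ge 1 (Y⟦(-1:ℤ)⟧) := t.ge_shift 0 (-1) 1 (by omega) Y hY
      have hv : ∀ g : Y⟦(-1:ℤ)⟧ ⟶ σ.E.functor.obj X, g = 0 :=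
        aux_serre_forward σ (fun f' => aux_zero_of t (by omega : (0:ℤ) < 1) hXle hYm f')
      have e : ((σ.E.functor.obj X)⟦(1:ℤ)⟧)⟦(-1:ℤ)⟧ ≅ σ.E.functor.obj X :=
        shiftShiftNeg (σ.E.functor.obj X) (1 : ℤ)
      have hmap : (shiftFunctor C (-1 : ℤ)).map f = 0 := by
        have : (shiftFunctor C (-1 : ℤ)).map f =
            ((shiftFunctor C (-1 : ℤ)).map f ≫ e.hom) ≫ e.inv := by
          rw [Category.assoc, e.hom_inv_id, Category.comp_id]
        rw [this, hv ((shiftFunctor C (-1 : ℤ)).map f ≫ e.hom), zero_comp]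
      exact (shiftFunctor C (-1 : ℤ)).map_injective (by rw [hmap, Functor.map_zero])
    · rintro ⟨hSge, hI⟩
      refine ⟨aux_le_of_orth t ?_, hSge⟩
      intro Z hZ f
      refine aux_serre_backward σ ?_ f
      intro g
      have hZ1 : t.ge 0 (Z⟦(1:ℤ)⟧) := t.ge_shift 1 1 0 (by omega) Z hZ
      have hmap : (shiftFunctor C (1 : ℤ)).map g = 0 := hI _ hZ1 _
      exact (shiftFunctor C (1 : ℤ)).map_injective (by rw [hmap, Functor.map_zero])
  exact ⟨hPB, hPB.trans hBI⟩
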